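/- Let S be a finite semigroup that admits an injective semigroup homomorphism into a direct product C × N of a finite Clifford semigroup C and a finite nilpotent semigroup N. Then S is an ideal extension of a Clifford semigroup by a nilpotent semigroup: there exist an ideal J of S that is a Clifford semigroup and d ∈ ℕ such that every product of d elements of S lies in J. -/

import Mathlib

/-- Product of a nonempty list of semigroup elements: `a * l₁ * l₂ * ⋯`. -/
def sgProd {S : Type*} [Semigroup S] (a : S) (l : List S) : S :=
  l.foldl (· * ·) a

/-- `spow a m = a ^ m` for `m ≥ 1` (with junk value `a` at `m = 0`). -/
def spow {S : Type*} [Semigroup S] (a : S) : ℕ → S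
  | 0 => a
  | 1 => a
  | (n + 2) => spow a (n + 1) * a

/-- A (two-sided) ideal of a semigroup: a nonempty subset absorbing
multiplication on both sides. -/
def IsIdeal {S : Type*} [Semigroup S] (I : Set S) : Prop :=
  I.Nonempty ∧ ∀ s : S, ∀ x ∈ I, s * x ∈ I ∧ x * s ∈ I

/-- A subset of a semigroup that is a subsemigroup which is a group. -/
def IsGroupSubset {S : Type*} [Semigroup S] (G : Set S) : Prop :=
  (∀ x ∈ G, ∀ y ∈ G, x * y ∈ G) ∧
    ∃ e ∈ G, (∀ x ∈ G, e * x = x ∧ x * e = x) ∧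
      ∀ x ∈ G, ∃ y ∈ G, x * y = e ∧ y * x = e

/-- A subset of a semigroup that is a Clifford semigroup in its own right:
it is closed under multiplication, completely regular (every element lies in a
subsemigroup which is a group), and its idempotents are central in it. -/
def IsCliffordSubset {S : Type*} [Semigroup S] (C : Set S) : Prop :=
  (∀ x ∈ C, ∀ y ∈ C, x * y ∈ C) ∧
    (∀ x ∈ C, ∃ G ⊆ C, IsGroupSubset G ∧ x ∈ G) ∧
    (∀ e ∈ C, e * e = e → ∀ s ∈ C, e * s = s * e)

/-- A semigroup is a Clifford semigroup. -/
def IsCliffordSG (C : Type*) [Semigroup C] : Prop :=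
  IsCliffordSubset (Set.univ : Set C)

/-- A semigroup is nilpotent: for some `d`, any two products of at least `d`
elements are equal. -/
def IsNilpotentSG (N : Type*) [Semigroup N] : Prop :=
  ∃ d : ℕ, ∀ (a b : N) (l l' : List N),
    d ≤ l.length + 1 → d ≤ l'.length + 1 → sgProd a l = sgProd b l'

section Aux
variable {S : Type*} [Semigroup S]

theorem sgProd_nil (a : S) : sgProd a [] = a := rfl

theorem sgProd_cons (a b : S) (l : List S) : sgProd a (b :: l) = sgProd (a * b) l := rfl

theorem mul_sgProd (s a : S) (l : List S) : s * sgProd a l = sgProd (s * a) l := by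
  induction l generalizing a with
  | nil => rfl
  | cons b l ih => simp only [sgProd_cons, ih, mul_assoc]

theorem sgProd_mul_sgProd (a b : S) (l l' : List S) :
    sgProd a l * sgProd b l' = sgProd a (l ++ b :: l') := by
  induction l generalizing a with
  | nil => simp only [sgProd_nil, List.nil_append, sgProd_cons, mul_sgProd]
  | cons c l ih => simp only [sgProd_cons, List.cons_append, ih]

theorem map_sgProd {T : Type*} [Semigroup T] (f : S → T)
    (hf : ∀ x y, f (x * y) = f x * f y) (a : S) (l : List S) :
    f (sgProd a l) = sgProd (f a) (l.map f) := by
  induction l generalizing a with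
  | nil => rfl
  | cons b l ih => simp only [sgProd_cons, List.map_cons, ih, hf]

theorem spow_one (a : S) : spow a 1 = a := rfl

theorem spow_succ (a : S) (k : ℕ) (hk : 1 ≤ k) : spow a (k + 1) = spow a k * a := by
  obtain ⟨n, rfl⟩ : ∃ n, k = n + 1 := ⟨k - 1, by omega⟩
  rfl

theorem spow_add (a : S) (m k : ℕ) (hm : 1 ≤ m) (hk : 1 ≤ k) :
    spow a (m + k) = spow a m * spow a k := by
  induction k with
  | zero => omega
  | succ k ih =>
    rcases Nat.eq_zero_or_pos k with h | h
    · subst h; rw [spow_succ a m hm, spow_one]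
    · rw [← Nat.add_assoc, spow_succ a (m + k) (by omega), ih h, spow_succ a k h, mul_assoc]

theorem exists_idem_spow [Finite S] (x : S) :
    ∃ m, 1 ≤ m ∧ spow x m * spow x m = spow x m := by
  obtain ⟨i, j, hne, heq⟩ := Finite.exists_ne_map_eq_of_infinite (fun n : ℕ => spow x (n + 1))
  wlog hij : i < j generalizing i j
  · exact this j i hne.symm heq.symm (by omega)
  have hp : 1 ≤ j - i := by omega
  have heq' : spow x ((i + 1) + (j - i)) = spow x (i + 1) := by
    have h : (i + 1) + (j - i) = j + 1 := by omega
    rw [h]; exact heq.symm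
  have step : ∀ n, i + 1 ≤ n → spow x (n + (j - i)) = spow x n := by
    intro n hn
    obtain ⟨r, rfl⟩ : ∃ r, n = (i + 1) + r := ⟨n - (i + 1), by omega⟩
    rcases Nat.eq_zero_or_pos r with h | h
    · subst h; simpa using heq'
    · have h2 : (i + 1) + r + (j - i) = ((i + 1) + (j - i)) + r := by omega
      rw [h2, spow_add x ((i + 1) + (j - i)) r (by omega) h, heq',
        ← spow_add x (i + 1) r (by omega) h]
  have multi : ∀ k n, i + 1 ≤ n → spow x (n + k * (j - i)) = spow x n := by
    intro k
    induction k with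
    | zero => simp
    | succ k ih =>
      intro n hn
      have h3 : n + (k + 1) * (j - i) = (n + k * (j - i)) + (j - i) := by ring
      rw [h3, step _ (by omega), ih n hn]
  have hm : 1 ≤ (i + 1) * (j - i) := Nat.mul_pos (by omega) hp
  refine ⟨(i + 1) * (j - i), hm, ?_⟩
  rw [← spow_add x _ _ hm hm]
  exact multi (i + 1) ((i + 1) * (j - i)) (Nat.le_mul_of_pos_right _ hp)

theorem idem_eq_id {G : Set S} (hG : IsGroupSubset G) {t : S} (ht : t ∈ G)
    (hidem : t * t = t) : ∀ s ∈ G, t * s = s ∧ s * t = s := by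
  obtain ⟨hcl, e, heG, hid, hinv⟩ := hG
  obtain ⟨y, hyG, hy1, hy2⟩ := hinv t ht
  have hte : t = e := by
    calc t = t * e := ((hid t ht).2).symm
    _ = t * (t * y) := by rw [hy1]
    _ = (t * t) * y := by rw [mul_assoc]
    _ = t * y := by rw [hidem]
    _ = e := hy1
  intro s hs; rw [hte]; exact hid s hs

end Aux

/-- A finite semigroup that embeds into a direct product of a
finite Clifford semigroup and a finite nilpotent semigroup is an ideal
extension of a Clifford semigroup by a nilpotent semigroup: there are an ideal
`J` of `S` that is a Clifford semigroup and `d ∈ ℕ` such that every product of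
`d` (hence of at least `d`) elements of `S` lies in `J`. -/
theorem stmt3 {S C N : Type*} [Semigroup S] [Finite S] [Nonempty S]
    [Semigroup C] [Finite C] [Semigroup N] [Finite N]
    (hC : IsCliffordSG C) (hN : IsNilpotentSG N)
    (f : S → C × N) (hinj : Function.Injective f)
    (hhom : ∀ x y : S, f (x * y) = f x * f y) :
    ∃ (J : Set S) (d : ℕ), IsIdeal J ∧ IsCliffordSubset J ∧
      ∀ (a : S) (l : List S), d ≤ l.length + 1 → sgProd a l ∈ J := by
  classical
  obtain ⟨d, hd⟩ := hN
  set g : S → C := fun x => (f x).1 with hg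
  have ghom : ∀ x y : S, g (x * y) = g x * g y := by
    intro x y; simp only [hg, hhom x y]; rfl
  set J : Set S := {x | ∃ a : S, ∃ l : List S, d ≤ l.length + 1 ∧ x = sgProd a l} with hJdef
  -- J absorbs multiplication
  have memJ_mul : ∀ x ∈ J, ∀ s : S, x * s ∈ J ∧ s * x ∈ J := by
    rintro x ⟨a, l, hl, rfl⟩ s
    constructor
    · refine ⟨a, l ++ [s], by simp; omega, ?_⟩
      have := sgProd_mul_sgProd a s l []
      simpa [sgProd_nil] using this
    · exact ⟨s * a, l, hl, (mul_sgProd s a l).symm ▸ (mul_sgProd s a l)⟩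
  have Jclosed : ∀ x ∈ J, ∀ y ∈ J, x * y ∈ J := fun x hx y hy => (memJ_mul y hy x).2
  -- second components constant on J
  have fsnd : ∀ x ∈ J, ∀ y ∈ J, (f x).2 = (f y).2 := by
    rintro x ⟨a, l, hl, rfl⟩ y ⟨b, l', hl', rfl⟩
    have e1 : ∀ (c : S) (m : List S), (f (sgProd c m)).2
        = sgProd (f c).2 ((m.map f).map Prod.snd) := by
      intro c m
      rw [map_sgProd f hhom, map_sgProd (Prod.snd : C × N → N) (fun _ _ => rfl)]
    rw [e1, e1]
    exact hd _ _ _ _ (by simpa using hl) (by simpa using hl')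
  have ginj : ∀ x ∈ J, ∀ y ∈ J, g x = g y → x = y := by
    intro x hx y hy h
    exact hinj (Prod.ext h (fsnd x hx y hy))
  -- spow facts
  have spowJ : ∀ x ∈ J, ∀ k, 1 ≤ k → spow x k ∈ J := by
    intro x hx k hk
    induction k with
    | zero => omega
    | succ k ih =>
      rcases Nat.eq_zero_or_pos k with h | h
      · subst h; exact hx
      · rw [spow_succ x k h]; exact Jclosed _ (ih h) _ hx
  have g_spow : ∀ (x : S) (k : ℕ), 1 ≤ k → g (spow x k) = spow (g x) k := by
    intro x k hk
    induction k with
    | zero => omega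
    | succ k ih =>
      rcases Nat.eq_zero_or_pos k with h | h
      · subst h; rfl
      · rw [spow_succ x k h, ghom, ih h, spow_succ (g x) k h]
  -- the main regularity fact: every x ∈ J satisfies spow x (m+1) = x for an idempotent power
  have key : ∀ x ∈ J, ∃ m, 1 ≤ m ∧ spow x (m + 1) = x := by
    intro x hx
    obtain ⟨m, hm, hidem⟩ := exists_idem_spow x
    obtain ⟨GC, -, hGC, hgx⟩ := hC.2.1 (g x) trivial
    have hGCin : ∀ k, 1 ≤ k → spow (g x) k ∈ GC := by
      intro k hk
      induction k with
      | zero => omega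
      | succ k ih =>
        rcases Nat.eq_zero_or_pos k with h | h
        · subst h; exact hgx
        · rw [spow_succ (g x) k h]; exact hGC.1 _ (ih h) _ hgx
    have h2 : spow (g x) m * spow (g x) m = spow (g x) m := by
      rw [← g_spow x m hm, ← ghom, hidem]
    have h4 := (idem_eq_id hGC (hGCin m hm) h2 (g x) hgx).1
    have h5 : g (spow x (m + 1)) = g x := by
      rw [g_spow x (m + 1) (by omega), spow_succ (g x) m hm, h4]
    exact ⟨m, hm, ginj _ (spowJ x hx (m + 1) (by omega)) _ hx h5⟩
  refine ⟨J, d, ⟨⟨sgProd (Classical.arbitrary S) (List.replicate d (Classical.arbitrary S)),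
      ⟨_, _, by simp, rfl⟩⟩, fun s x hx => ⟨(memJ_mul x hx s).2, (memJ_mul x hx s).1⟩⟩,
    ⟨Jclosed, ?_, ?_⟩, fun a l hl => ⟨a, l, hl, rfl⟩⟩
  · -- completely regular
    intro x hx
    obtain ⟨m, hm, hfix⟩ := key x hx
    obtain ⟨w, rfl⟩ : ∃ w, m = w + 1 := ⟨m - 1, by omega⟩
    set m := w + 1
    have cyc : ∀ k, 1 ≤ k → spow x (k + m) = spow x k := by
      intro k hk
      obtain ⟨r, rfl⟩ : ∃ r, k = 1 + r := ⟨k - 1, by omega⟩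
      rcases Nat.eq_zero_or_pos r with h | h
      · subst h; simpa [Nat.add_comm, spow_one] using hfix
      · have h2 : 1 + r + m = (m + 1) + r := by omega
        rw [h2, spow_add x (m + 1) r (by omega) h, hfix,
          spow_add x 1 r le_rfl h, spow_one]
    have cycm : ∀ j k, 1 ≤ k → spow x (k + j * m) = spow x k := by
      intro j
      induction j with
      | zero => simp
      | succ j ih =>
        intro k hk
        have h3 : k + (j + 1) * m = (k + j * m) + m := by ring
        rw [h3, cyc _ (by omega), ih k hk]
    refine ⟨{y | ∃ k, 1 ≤ k ∧ y = spow x k}, ?_, ⟨?_, ⟨spow x m, ⟨m, by omega, rfl⟩, ?_, ?_⟩⟩,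
      ⟨1, le_refl 1, rfl⟩⟩
    · rintro y ⟨k, hk, rfl⟩; exact spowJ x hx k hk
    · rintro y ⟨k, hk, rfl⟩ z ⟨k', hk', rfl⟩
      exact ⟨k + k', by omega, (spow_add x k k' hk hk').symm⟩
    · rintro y ⟨k, hk, rfl⟩
      constructor
      · rw [← spow_add x m k (by omega) hk, Nat.add_comm, cyc k hk]
      · rw [← spow_add x k m hk (by omega), cyc k hk]
    · rintro y ⟨k, hk, rfl⟩
      refine ⟨spow x (k * w + m), ⟨k * w + m, by omega, rfl⟩, ?_, ?_⟩
      · rw [← spow_add x k (k * w + m) hk (by omega)]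
        have h4 : k + (k * w + m) = m + k * m := by simp only [m]; ring
        rw [h4, cycm k m (by omega)]
      · rw [← spow_add x (k * w + m) k (by omega) hk]
        have h4 : k * w + m + k = m + k * m := by simp only [m]; ring
        rw [h4, cycm k m (by omega)]
  · -- idempotents central
    intro e he hidem s hs
    have h1 : g e * g e = g e := by rw [← ghom, hidem]
    have h2 := hC.2.2 (g e) trivial h1 (g s) trivial
    have h3 : g (e * s) = g (s * e) := by rw [ghom, ghom, h2]
    exact ginj _ (Jclosed e he s hs) _ (Jclosed s hs e he) h3
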